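/- For the datastream FEP construction, every Send call with flush flag set fully empties both sender buffers: if Send(st_S, m, p, 1) returns (st_S', c), then in the returned state st_S' both the plaintext buffer buf and the output buffer obuf are the empty string, and the returned fragment c consists of the entire contents of the output buffer obuf at the moment of return. -/
import Mathlib


/-! Byte strings -/

abbrev Byte := Fin 256
abbrev Bytes := List Byte

def byte (n : ℕ) : Byte := ⟨n % 256, Nat.mod_lt n (by norm_num)⟩
def b0 : Byte := byte 0
def b1 : Byte := byte 1

/-- Two-byte (big-endian) encoding of a natural number. -/
def enc2 (n : ℕ) : Bytes := [byte (n / 256), byte n]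

/-- Decode the first two bytes of a byte string as a big-endian natural number. -/
def dec2 : Bytes → ℕ
  | a :: b :: _ => 256 * a.val + b.val
  | _ => 0

/-- A deterministic nonce-based AEAD scheme on byte strings, with perfect
correctness, length additivity (`ℓ_Tag` bytes of overhead), and soundness of
decryption (`Dec` succeeds only on genuine encryptions). -/
structure AEAD where
  Key : Type
  lTag : ℕ
  lTag_pos : 0 < lTag
  Enc : Key → ℕ → Bytes → Bytes
  Dec : Key → ℕ → Bytes → Option Bytes
  correct : ∀ k n m, Dec k n (Enc k n m) = some m
  lenAdd : ∀ k n m, (Enc k n m).length = m.length + lTag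
  decSound : ∀ k n c m, Dec k n c = some m → c = Enc k n m

/-- `ℓ_len = 2 + ℓ_Tag`, the size of a length block. -/
def lLen (A : AEAD) : ℕ := 2 + A.lTag
/-- `ol = 2^16 - 1`, the largest payload-block length. -/
def ol : ℕ := 2 ^ 16 - 1
/-- `il = 2^16 - 3 - ℓ_Tag`, the largest plaintext length fitting in a payload block. -/
def il (A : AEAD) : ℕ := 2 ^ 16 - 3 - A.lTag

/-- Sender state: key, sequence number, plaintext buffer, output buffer. -/
structure SenderSt (A : AEAD) where
  k : A.Key
  seqno : ℕ
  buf : Bytes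
  obuf : Bytes

/-- The condition under which `Send` returns:
`|obuf| ≥ p` and (`f = 0` or `buf = ε`). -/
def retCond (A : AEAD) (st : SenderSt A) (p : ℤ) (f : Bool) : Prop :=
  p ≤ (st.obuf.length : ℤ) ∧ (f = false ∨ st.buf = [])

instance (A : AEAD) (st : SenderSt A) (p : ℤ) (f : Bool) :
    Decidable (retCond A st p f) := by
  unfold retCond
  infer_instance

/-- One recursive step of `Send` (lines 7–18): form a length block and a
payload block (with minimal padding `ℓ_p` so that the output buffer together
with the new pair reaches `p` bytes, or the payload block is maximal), append
them to the output buffer, and consume `o = min(|buf|, il)` plaintext bytes. -/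
def mkBlocks (A : AEAD) (st : SenderSt A) (p : ℤ) : SenderSt A :=
  let o : ℕ := min st.buf.length (il A)
  let base : ℕ := 2 + o + A.lTag
  let lp : ℕ := min (p - ((st.obuf.length + base + lLen A : ℕ) : ℤ)).toNat (ol - base)
  let lc : ℕ := base + lp
  { k := st.k
    seqno := st.seqno + 2
    buf := st.buf.drop o
    obuf := st.obuf ++ A.Enc st.k st.seqno (enc2 lc) ++
      A.Enc st.k (st.seqno + 1) (enc2 lp ++ List.replicate lp b0 ++ st.buf.take o) }

/-- The recursion underlying `Send`, with explicit fuel bounding the number of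
recursive calls; `none` means the fuel ran out before `Send` returned. -/
def sendFuel (A : AEAD) : ℕ → SenderSt A → ℤ → Bool → Option (SenderSt A × Bytes)
  | 0, _, _, _ => none
  | fuel + 1, st, p, f =>
    if retCond A st p f then
      let t : ℕ := (max p (if f then (st.obuf.length : ℤ) else 0)).toNat
      some ({ st with obuf := st.obuf.drop t }, st.obuf.take t)
    else
      sendFuel A fuel (mkBlocks A st p) p f

/-- `Send(st_S, m, p, f)`, computed with the given recursion fuel. -/
def sendCall (A : AEAD) (fuel : ℕ) (st : SenderSt A) (m : Bytes) (p : ℤ) (f : Bool) :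
    Option (SenderSt A × Bytes) :=
  sendFuel A fuel { st with buf := st.buf ++ m } p f

/-- Receiver state: key, sequence number, ciphertext buffer, fail flag. -/
structure RecvSt (A : AEAD) where
  k : A.Key
  seqno : ℕ
  buf : Bytes
  fail : Bool

/-- One iteration of the `Recv` processing loop.  `Sum.inl` means the loop
continues with the new state and accumulated output; `Sum.inr` means `Recv`
returns (either by a decryption failure, which sets the fail flag and returns
`(ε, 0)`, or by stopping the loop and returning the accumulated message). -/
def recvStep (A : AEAD) (st : RecvSt A) (m : Bytes) :
    (RecvSt A × Bytes) ⊕ (RecvSt A × Bytes × Bool) :=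
  if lLen A ≤ st.buf.length then
    match A.Dec st.k st.seqno (st.buf.take (lLen A)) with
    | none => Sum.inr ({ st with fail := true }, [], false)
    | some lb =>
      let lc := dec2 lb
      if lLen A + lc ≤ st.buf.length then
        let st' : RecvSt A := { st with buf := st.buf.drop (lLen A + lc) }
        match A.Dec st.k (st.seqno + 1) ((st.buf.drop (lLen A)).take lc) with
        | none => Sum.inr ({ st' with fail := true }, [], false)
        | some m' =>
          let lp := min (dec2 m') (m'.length - 2)
          Sum.inl ({ st' with seqno := st.seqno + 2 }, m ++ m'.drop (2 + lp))
      else Sum.inr (st, m, false)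
  else Sum.inr (st, m, false)

/-- The `Recv` processing loop, with explicit fuel bounding the number of
iterations; `none` means the fuel ran out before the loop finished. -/
def recvLoop (A : AEAD) : ℕ → RecvSt A → Bytes → Option (RecvSt A × Bytes × Bool)
  | 0, _, _ => none
  | fuel + 1, st, m =>
    match recvStep A st m with
    | Sum.inr r => some r
    | Sum.inl (st', m') => recvLoop A fuel st' m'

/-- `Recv(st_R, c)`, computed with the given loop fuel. -/
def recvCall (A : AEAD) (fuel : ℕ) (st : RecvSt A) (c : Bytes) :
    Option (RecvSt A × Bytes × Bool) :=
  if st.fail then some (st, [], false)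
  else recvLoop A fuel { st with buf := st.buf ++ c } []

/-- Every `Send` call with flush flag set fully empties both
sender buffers: if `Send(st_S, m, p, 1)` returns `(st_S', c)`, then in `st_S'`
both the plaintext buffer `buf` and the output buffer `obuf` are empty, and
the returned fragment `c` is the entire contents of the output buffer at the
moment of return. -/
theorem stmt2_aux (A : AEAD) (fuel : ℕ) :
    ∀ (st : SenderSt A) (p : ℤ) (st' : SenderSt A) (c : Bytes),
    sendFuel A fuel st p true = some (st', c) →
    st'.buf = [] ∧ st'.obuf = [] ∧
    ∃ stR : SenderSt A, retCond A stR p true ∧ c = stR.obuf ∧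
      st' = { stR with obuf := [] } := by
  induction fuel with
  | zero => intro st p st' c h; simp [sendFuel] at h
  | succ n ih =>
    intro st p st' c h
    rw [sendFuel] at h
    split at h
    · rename_i hret
      obtain ⟨hp, hbuf⟩ := hret
      have hbuf' : st.buf = [] := by
        rcases hbuf with h' | h'
        · exact absurd h' (by simp)
        · exact h'
      simp only [Option.some.injEq, Prod.mk.injEq] at h
      obtain ⟨hst, hc⟩ := h
      have ht : (max p (if True then (st.obuf.length : ℤ) else 0)).toNat
          = st.obuf.length := by
        rw [if_pos trivial, max_eq_right hp, Int.toNat_natCast]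
      rw [ht, List.drop_length] at hst
      rw [ht, List.take_length] at hc
      refine ⟨?_, ?_, st, ⟨hp, Or.inr hbuf'⟩, hc.symm, ?_⟩
      · rw [← hst]; exact hbuf'
      · rw [← hst]
      · rw [← hst]
    · exact ih _ p st' c h

theorem stmt2 (A : AEAD) (fuel : ℕ) (st : SenderSt A) (m : Bytes) (p : ℤ)
    (st' : SenderSt A) (c : Bytes)
    (h : sendCall A fuel st m p true = some (st', c)) :
    st'.buf = [] ∧ st'.obuf = [] ∧
    ∃ stR : SenderSt A, retCond A stR p true ∧ c = stR.obuf ∧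
      st' = { stR with obuf := [] } := by
  exact stmt2_aux A fuel _ p st' c h
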